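/- Weak forcing depends only on the elementary type: if (A, ā) and (B, b̄) are elementarily equivalent (satisfy the same finitary formulas), then for any infinitary formula ψ, A ⊩* ψ(ā) if and only if B ⊩* ψ(b̄). -/

import Mathlib

open FirstOrder

universe u

namespace InfinitaryForcing

variable (L : FirstOrder.Language.{u, u})

/-- Infinitary formulas of `L_{∞,ω}`: set-indexed conjunctions and disjunctions,
finitary quantification, free variables among `Fin n`. -/
inductive InfForm : ℕ → Type (u + 1)
  | equal {n : ℕ} (t₁ t₂ : L.Term (Fin n)) : InfForm n
  | rel {n l : ℕ} (R : L.Relations l) (ts : Fin l → L.Term (Fin n)) : InfForm n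
  | not {n : ℕ} (φ : InfForm n) : InfForm n
  | disj {n : ℕ} {ι : Type u} (Φ : ι → InfForm n) : InfForm n
  | conj {n : ℕ} {ι : Type u} (Φ : ι → InfForm n) : InfForm n
  | ex {n : ℕ} (φ : InfForm (n + 1)) : InfForm n
  | all {n : ℕ} (φ : InfForm (n + 1)) : InfForm n

variable {L}

/-- Tarskian satisfaction for infinitary formulas. -/
def Realize : ∀ {n : ℕ}, InfForm L n → ∀ (M : Type u), L.Structure M → (Fin n → M) → Prop
  | _, .equal t₁ t₂, _M, S, v => letI := S; t₁.realize v = t₂.realize v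
  | _, .rel R ts, _M, S, v => letI := S; Language.Structure.RelMap R fun i => (ts i).realize v
  | _, .not φ, M, S, v => ¬ Realize φ M S v
  | _, .disj Φ, M, S, v => ∃ i, Realize (Φ i) M S v
  | _, .conj Φ, M, S, v => ∀ i, Realize (Φ i) M S v
  | _, .ex φ, M, S, v => ∃ b : M, Realize φ M S (Fin.snoc v b)
  | _, .all φ, M, S, v => ∀ b : M, Realize φ M S (Fin.snoc v b)

/-- Elementary embeddings, with the structures made explicit. -/
abbrev ElemEmb (M N : Type u) (SM : L.Structure M) (SN : L.Structure N) : Type u :=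
  @FirstOrder.Language.ElementaryEmbedding L M N SM SN

/-- The strong forcing relation `A ⊩ ψ(ā)`, where conditions are structures
ordered by elementary extension. -/
def Forces : ∀ {n : ℕ}, InfForm L n → ∀ (M : Type u), L.Structure M → (Fin n → M) → Prop
  | _, .equal t₁ t₂, _M, S, v => letI := S; t₁.realize v = t₂.realize v
  | _, .rel R ts, _M, S, v => letI := S; Language.Structure.RelMap R fun i => (ts i).realize v
  | _, .not φ, M, S, v =>
      ∀ (N : Type u) (SN : L.Structure N) (f : ElemEmb M N S SN),
        ¬ Forces φ N SN (fun i => f.toFun (v i))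
  | _, .disj Φ, M, S, v => ∃ i, Forces (Φ i) M S v
  | _, .conj Φ, M, S, v =>
      ∀ (N : Type u) (SN : L.Structure N) (f : ElemEmb M N S SN) (i : _),
        ∃ (P : Type u) (SP : L.Structure P) (g : ElemEmb N P SN SP),
          Forces (Φ i) P SP (fun k => g.toFun (f.toFun (v k)))
  | _, .ex φ, M, S, v => ∃ b : M, Forces φ M S (Fin.snoc v b)
  | _, .all φ, M, S, v =>
      ∀ (N : Type u) (SN : L.Structure N) (f : ElemEmb M N S SN) (b : N),
        ∃ (P : Type u) (SP : L.Structure P) (g : ElemEmb N P SN SP),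
          Forces φ P SP (Fin.snoc (fun k => g.toFun (f.toFun (v k))) (g.toFun b))

/-- `M` decides `ψ(v)` if it strongly forces `ψ(v)` or `¬ψ(v)`. -/
def Decides {n : ℕ} (ψ : InfForm L n) (M : Type u) (S : L.Structure M) (v : Fin n → M) : Prop :=
  Forces ψ M S v ∨ Forces ψ.not M S v

/-- The weak forcing relation `A ⊩* ψ := A ⊩ ¬¬ψ`. -/
def WForces {n : ℕ} (ψ : InfForm L n) (M : Type u) (S : L.Structure M) (v : Fin n → M) : Prop :=
  Forces ψ.not.not M S v

variable (L)

/-- Finitary (`L_{ω,ω}`) formulas among the infinitary ones. -/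
inductive InfForm.IsFinitary : ∀ {n : ℕ}, InfForm L n → Prop
  | equal {n} (t₁ t₂ : L.Term (Fin n)) : IsFinitary (.equal t₁ t₂)
  | rel {n l} (R : L.Relations l) (ts : Fin l → L.Term (Fin n)) : IsFinitary (.rel R ts)
  | not {n} {φ : InfForm L n} : IsFinitary φ → IsFinitary φ.not
  | disj {n} {ι : Type u} (_ : Finite ι) {Φ : ι → InfForm L n} :
      (∀ i, IsFinitary (Φ i)) → IsFinitary (.disj Φ)
  | conj {n} {ι : Type u} (_ : Finite ι) {Φ : ι → InfForm L n} :
      (∀ i, IsFinitary (Φ i)) → IsFinitary (.conj Φ)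
  | ex {n} {φ : InfForm L (n + 1)} : IsFinitary φ → IsFinitary φ.ex
  | all {n} {φ : InfForm L (n + 1)} : IsFinitary φ → IsFinitary φ.all

/-- Quantifier-free infinitary formulas. -/
inductive InfForm.IsQF : ∀ {n : ℕ}, InfForm L n → Prop
  | equal {n} (t₁ t₂ : L.Term (Fin n)) : IsQF (.equal t₁ t₂)
  | rel {n l} (R : L.Relations l) (ts : Fin l → L.Term (Fin n)) : IsQF (.rel R ts)
  | not {n} {φ : InfForm L n} : IsQF φ → IsQF φ.not
  | disj {n} {ι : Type u} {Φ : ι → InfForm L n} : (∀ i, IsQF (Φ i)) → IsQF (.disj Φ)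
  | conj {n} {ι : Type u} {Φ : ι → InfForm L n} : (∀ i, IsQF (Φ i)) → IsQF (.conj Φ)

/-- `L_{ω₁,ω}` formulas: all conjunctions and disjunctions are countable. -/
inductive InfForm.IsCtble : ∀ {n : ℕ}, InfForm L n → Prop
  | equal {n} (t₁ t₂ : L.Term (Fin n)) : IsCtble (.equal t₁ t₂)
  | rel {n l} (R : L.Relations l) (ts : Fin l → L.Term (Fin n)) : IsCtble (.rel R ts)
  | not {n} {φ : InfForm L n} : IsCtble φ → IsCtble φ.not
  | disj {n} {ι : Type u} (_ : Countable ι) {Φ : ι → InfForm L n} :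
      (∀ i, IsCtble (Φ i)) → IsCtble (.disj Φ)
  | conj {n} {ι : Type u} (_ : Countable ι) {Φ : ι → InfForm L n} :
      (∀ i, IsCtble (Φ i)) → IsCtble (.conj Φ)
  | ex {n} {φ : InfForm L (n + 1)} : IsCtble φ → IsCtble φ.ex
  | all {n} {φ : InfForm L (n + 1)} : IsCtble φ → IsCtble φ.all

/-- A fragment of `L_{∞,ω}`: a family of sets of formulas closed under negation
and subformulas. -/
structure IsFragment (𝔸 : ∀ n : ℕ, Set (InfForm L n)) : Prop where
  not_mem : ∀ {n} {φ : InfForm L n}, φ ∈ 𝔸 n → φ.not ∈ 𝔸 n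
  of_not : ∀ {n} {φ : InfForm L n}, φ.not ∈ 𝔸 n → φ ∈ 𝔸 n
  of_disj : ∀ {n} {ι : Type u} {Φ : ι → InfForm L n}, InfForm.disj Φ ∈ 𝔸 n → ∀ i, Φ i ∈ 𝔸 n
  of_conj : ∀ {n} {ι : Type u} {Φ : ι → InfForm L n}, InfForm.conj Φ ∈ 𝔸 n → ∀ i, Φ i ∈ 𝔸 n
  of_ex : ∀ {n} {φ : InfForm L (n + 1)}, φ.ex ∈ 𝔸 n → φ ∈ 𝔸 (n + 1)
  of_all : ∀ {n} {φ : InfForm L (n + 1)}, φ.all ∈ 𝔸 n → φ ∈ 𝔸 (n + 1)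

variable {L}

/-- `G` is `𝔸`-generic if it decides every instance of every formula of `𝔸`. -/
def IsGeneric (𝔸 : ∀ n : ℕ, Set (InfForm L n)) (G : Type u) (SG : L.Structure G) : Prop :=
  ∀ (n : ℕ) (ψ : InfForm L n), ψ ∈ 𝔸 n → ∀ v : Fin n → G, Decides ψ G SG v

variable (L)

mutual
  /-- Finitary `∃ₙ` formulas: `n` alternating blocks of quantifiers beginning
  with existentials, counting finite conjunctions/disjunctions as free. -/
  inductive IsEx : ℕ → ∀ {k : ℕ}, InfForm L k → Prop
    | equal {m k} (t₁ t₂ : L.Term (Fin k)) : IsEx m (.equal t₁ t₂)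
    | rel {m k l} (R : L.Relations l) (ts : Fin l → L.Term (Fin k)) : IsEx m (.rel R ts)
    | not {m k} {φ : InfForm L k} : IsAll m φ → IsEx m φ.not
    | disj {m k} {ι : Type u} (_ : Finite ι) {Φ : ι → InfForm L k} :
        (∀ i, IsEx m (Φ i)) → IsEx m (.disj Φ)
    | conj {m k} {ι : Type u} (_ : Finite ι) {Φ : ι → InfForm L k} :
        (∀ i, IsEx m (Φ i)) → IsEx m (.conj Φ)
    | ex {m k} {φ : InfForm L (k + 1)} : IsEx m φ → 1 ≤ m → IsEx m φ.ex
    | exStep {m k} {φ : InfForm L (k + 1)} : IsAll m φ → IsEx (m + 1) φ.ex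

  /-- Finitary `∀ₙ` formulas. -/
  inductive IsAll : ℕ → ∀ {k : ℕ}, InfForm L k → Prop
    | equal {m k} (t₁ t₂ : L.Term (Fin k)) : IsAll m (.equal t₁ t₂)
    | rel {m k l} (R : L.Relations l) (ts : Fin l → L.Term (Fin k)) : IsAll m (.rel R ts)
    | not {m k} {φ : InfForm L k} : IsEx m φ → IsAll m φ.not
    | disj {m k} {ι : Type u} (_ : Finite ι) {Φ : ι → InfForm L k} :
        (∀ i, IsAll m (Φ i)) → IsAll m (.disj Φ)
    | conj {m k} {ι : Type u} (_ : Finite ι) {Φ : ι → InfForm L k} :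
        (∀ i, IsAll m (Φ i)) → IsAll m (.conj Φ)
    | all {m k} {φ : InfForm L (k + 1)} : IsAll m φ → 1 ≤ m → IsAll m φ.all
    | allStep {m k} {φ : InfForm L (k + 1)} : IsEx m φ → IsAll (m + 1) φ.all
end

/-- `f : A → B` is an `n`-elementary map (`A ⪯ₙ B` when `f` is an inclusion):
every finitary `∃ₙ` or `∀ₙ` formula transfers along `f`. -/
def IsNElemMap (n : ℕ) {A B : Type u} (SA : L.Structure A) (SB : L.Structure B)
    (f : A → B) : Prop :=
  ∀ (k : ℕ) (φ : InfForm L k), (IsEx L n φ ∨ IsAll L n φ) →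
    ∀ v : Fin k → A, Realize φ A SA v ↔ Realize φ B SB (fun i => f (v i))

/-- `f : A → B` is an elementary map: every finitary formula transfers along `f`. -/
def IsElemMap {A B : Type u} (SA : L.Structure A) (SB : L.Structure B)
    (f : A → B) : Prop :=
  ∀ (k : ℕ) (φ : InfForm L k), InfForm.IsFinitary L φ →
    ∀ v : Fin k → A, Realize φ A SA v ↔ Realize φ B SB (fun i => f (v i))

section Aux

open FirstOrder.Language

variable {L : FirstOrder.Language.{u, u}}

/-- Realization of a bounded formula depends only on its free variables. -/
private theorem realize_congr_freeVar {M : Type*} [L.Structure M] {β : Type*} [DecidableEq β]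
    {k : ℕ} (φ : L.BoundedFormula β k) {v v' : β → M} {xs : Fin k → M}
    (hvv : ∀ x ∈ φ.freeVarFinset, v x = v' x) :
    φ.Realize v xs ↔ φ.Realize v' xs := by
  have h0 : ↑φ.freeVarFinset ⊆ (↑φ.freeVarFinset : Set β) := fun x hx => hx
  refine (BoundedFormula.realize_restrictFreeVar' h0 (v := v)).symm.trans
    (Iff.trans ?_ (BoundedFormula.realize_restrictFreeVar' h0 (v := v')))
  exact iff_of_eq (congrArg
    (fun vv => (φ.restrictFreeVar (Set.inclusion h0)).Realize vv xs)
    (funext fun x => hvv x x.2))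

/-- An elementary embedding out of an empty structure which is elementarily equivalent
to the target. -/
private noncomputable def elemEmbOfIsEmpty {A B : Type u} [L.Structure A] [L.Structure B]
    (hA : IsEmpty A)
    (hsent : ∀ φ : L.Formula (Fin 0),
      φ.Realize (default : Fin 0 → A) ↔ φ.Realize (default : Fin 0 → B)) :
    A ↪ₑ[L] B where
  toFun := fun x => hA.elim x
  map_formula' := by
    intro k φ x
    cases k with
    | zero =>
      have h1 : ((fun y => hA.elim y) ∘ x : Fin 0 → B) = default := Subsingleton.elim _ _
      have h2 : x = default := Subsingleton.elim _ _
      rw [h1, h2]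
      exact (hsent φ).symm
    | succ k => exact (hA.false (x 0)).elim

/-- Expanding the constants along a map of index sets is an expansion. -/
private theorem withConstantsMap_expansion {M : Type u} (SL : L.Structure M)
    {α β : Type u} (f : α → β) (g : β → M) (fα : α → M) (hgf : g ∘ f = fα) :
    @Language.LHom.IsExpansionOn (L[[α]]) (L[[β]])
      (Language.LHom.sumMap (Language.LHom.id L) (Language.LHom.constantsOnMap f)) M
      (@Language.withConstantsStructure L M SL α (Language.constantsOn.structure fα))
      (@Language.withConstantsStructure L M SL β (Language.constantsOn.structure g)) := by
  letI := SL
  letI := Language.constantsOn.structure fα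
  letI := Language.constantsOn.structure g
  haveI h1 : (Language.LHom.constantsOnMap f).IsExpansionOn M :=
    Language.constantsOnMap_isExpansionOn hgf
  exact Language.LHom.sumMap_isExpansionOn (ϕ := Language.LHom.id L)
    (Language.LHom.constantsOnMap f) M

/-- Elementary amalgamation of pointed elementarily equivalent structures. -/
private theorem amalg {α A B : Type u} (SA : L.Structure A) (SB : L.Structure B)
    (a : α → A) (b : α → B)
    (H : ∀ φ : L.Formula α, φ.Realize a ↔ φ.Realize b) :
    ∃ (C : Type u) (SC : L.Structure C) (f : ElemEmb A C SA SC)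
      (g : ElemEmb B C SB SC), ∀ i, f.toFun (a i) = g.toFun (b i) := by
  classical
  letI := SA; letI := SB
  by_cases hAe : IsEmpty A
  · -- Degenerate case: both structures are empty.
    have hBe : IsEmpty B := by
      by_contra hB
      obtain ⟨y⟩ := not_isEmpty_iff.mp hB
      have hb : Formula.Realize (L := L)
          (BoundedFormula.ex ((Term.var (Sum.inr (0 : Fin 1))).bdEqual
            (Term.var (Sum.inr (0 : Fin 1)))) : L.Formula α) b := by
        refine BoundedFormula.realize_ex.mpr ⟨y, ?_⟩
        rw [BoundedFormula.realize_bdEqual]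
      obtain ⟨x, -⟩ := BoundedFormula.realize_ex.mp ((H _).mpr hb)
      exact hAe.false x
    have hsent : ∀ φ : L.Formula (Fin 0),
        φ.Realize (default : Fin 0 → A) ↔ φ.Realize (default : Fin 0 → B) := by
      intro φ
      have h1 := H (φ.relabel (Fin.elim0 : Fin 0 → α))
      rw [Formula.realize_relabel, Formula.realize_relabel,
        Subsingleton.elim ((a ∘ Fin.elim0) : Fin 0 → A) default,
        Subsingleton.elim ((b ∘ Fin.elim0) : Fin 0 → B) default] at h1
      exact h1
    exact ⟨B, SB, elemEmbOfIsEmpty hAe hsent, ElementaryEmbedding.refl L B,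
      fun i => (hAe.false (a i)).elim⟩
  · haveI hAne : Nonempty A := not_isEmpty_iff.mp hAe
    -- The compactness argument.
    let ιA : L[[A]] →ᴸ L[[A ⊕ B]] :=
      LHom.sumMap (LHom.id L) (LHom.constantsOnMap (Sum.inl : A → A ⊕ B))
    let ιB : L[[B]] →ᴸ L[[A ⊕ B]] :=
      LHom.sumMap (LHom.id L) (LHom.constantsOnMap (Sum.inr : B → A ⊕ B))
    let eqSent : α → L[[A ⊕ B]].Sentence := fun i =>
      Term.equal ((L.con (Sum.inl (a i))).term) ((L.con (Sum.inr (b i))).term)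
    let T : L[[A ⊕ B]].Theory :=
      ιA.onTheory (L.elementaryDiagram A) ∪ ιB.onTheory (L.elementaryDiagram B) ∪
        Set.range eqSent
    have hsat : T.IsSatisfiable := by
      rw [Theory.isSatisfiable_iff_isFinitelySatisfiable]
      intro T0 hT0
      -- Translate the finitely many relevant sentences into a single formula over `α ⊕ A`.
      let eqform : α → L.Formula (α ⊕ A) := fun i =>
        Term.equal (Term.var (Sum.inl i)) (Term.var (Sum.inr (a i)))
      let τ : L[[A ⊕ B]].Sentence → L.Formula (α ⊕ A) := fun φ0 =>
        if h : ∃ ψ0 ∈ L.elementaryDiagram A, ιA.onSentence ψ0 = φ0 then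
          (Formula.equivSentence.symm h.choose).relabel Sum.inr
        else if h' : ∃ i, eqSent i = φ0 then eqform h'.choose
        else ⊤
      have hτ1 : ∀ (φ0 : L[[A ⊕ B]].Sentence)
          (h : ∃ ψ0 ∈ L.elementaryDiagram A, ιA.onSentence ψ0 = φ0),
          τ φ0 = (Formula.equivSentence.symm h.choose).relabel Sum.inr :=
        fun φ0 h => dif_pos h
      have hτ2 : ∀ (φ0 : L[[A ⊕ B]].Sentence)
          (h1 : ¬ ∃ ψ0 ∈ L.elementaryDiagram A, ιA.onSentence ψ0 = φ0)
          (h2 : ∃ i, eqSent i = φ0), τ φ0 = eqform h2.choose :=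
        fun φ0 h1 h2 => (dif_neg h1).trans (dif_pos h2)
      have hτ3 : ∀ (φ0 : L[[A ⊕ B]].Sentence)
          (h1 : ¬ ∃ ψ0 ∈ L.elementaryDiagram A, ιA.onSentence ψ0 = φ0)
          (h2 : ¬ ∃ i, eqSent i = φ0), τ φ0 = ⊤ :=
        fun φ0 h1 h2 => (dif_neg h1).trans (dif_neg h2)
      let ψtot : L.Formula (α ⊕ A) := BoundedFormula.iInf (fun x : T0 => τ x)
      -- the combined formula is realized in `A` by the tautological assignment
      have hψA : BoundedFormula.Realize ψtot (Sum.elim a (id : A → A)) default := by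
        rw [BoundedFormula.realize_iInf]
        rintro ⟨φ0, _⟩
        by_cases h : ∃ ψ0 ∈ L.elementaryDiagram A, ιA.onSentence ψ0 = φ0
        · rw [hτ1 φ0 h]
          show Formula.Realize ((Formula.equivSentence.symm h.choose).relabel Sum.inr)
            (Sum.elim a (id : A → A))
          rw [Formula.realize_relabel]
          exact (Formula.realize_equivSentence_symm A h.choose
            (Sum.elim a (id : A → A) ∘ Sum.inr)).mpr h.choose_spec.1
        · by_cases h' : ∃ i, eqSent i = φ0
          · rw [hτ2 φ0 h h']
            show Formula.Realize (eqform h'.choose) (Sum.elim a (id : A → A))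
            exact Formula.realize_equal.mpr rfl
          · rw [hτ3 φ0 h h']
            exact BoundedFormula.realize_top.mpr trivial
      -- existentially quantify away the `A`-indexed free variables
      let SAset : Finset A := ψtot.freeVarFinset.preimage Sum.inr Sum.inr_injective.injOn
      let fmap : α ⊕ A → α ⊕ (Option {x // x ∈ SAset}) := fun d =>
        Sum.elim (fun i => Sum.inl i)
          (fun x => if h : x ∈ SAset then Sum.inr (some ⟨x, h⟩) else Sum.inr none) d
      let θ : L.Formula α := (ψtot.relabel fmap).iExs (Option {x // x ∈ SAset})
      have hθA : θ.Realize a := by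
        simp only [θ, Formula.realize_iExs, Formula.realize_relabel, Function.comp_def]
        have hagree : ∀ x ∈ ψtot.freeVarFinset, Sum.elim a (id : A → A) x =
            Sum.elim a (fun o : Option {z // z ∈ SAset} =>
              Option.elim o (Classical.arbitrary A) Subtype.val) (fmap x) := by
          intro x hx
          rcases x with i | y
          · rfl
          · have hy : y ∈ SAset := Finset.mem_preimage.mpr hx
            have hf : fmap (Sum.inr y) = Sum.inr (some (⟨y, hy⟩ : {z // z ∈ SAset})) :=
              dif_pos hy
            rw [hf]
            rfl
        exact ⟨fun o => Option.elim o (Classical.arbitrary A) Subtype.val,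
          (realize_congr_freeVar ψtot (xs := default) hagree).mp hψA⟩
      have hθB := (H θ).mp hθA
      simp only [θ, Formula.realize_iExs, Formula.realize_relabel, Function.comp_def] at hθB
      obtain ⟨w', hw'⟩ := hθB
      let j : A → B := fun x => if h : x ∈ SAset then w' (some ⟨x, h⟩) else w' none
      have hje : (fun d => Sum.elim b w' (fmap d)) = Sum.elim b j := by
        funext d
        match d with
        | .inl i => rfl
        | .inr x =>
          show Sum.elim b w' (if h : x ∈ SAset then Sum.inr (some ⟨x, h⟩)
            else Sum.inr none) = (if h : x ∈ SAset then w' (some ⟨x, h⟩) else w' none)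
          by_cases h : x ∈ SAset
          · rw [dif_pos h, dif_pos h]
            rfl
          · rw [dif_neg h, dif_neg h]
            rfl
      rw [show (fun d => Sum.elim b w' (fmap d)) = Sum.elim b j from hje] at hw'
      -- `B`, expanded by constants via `j`, is a model of `T0`
      letI cBA : (Language.constantsOn A).Structure B := Language.constantsOn.structure j
      letI cBB : (Language.constantsOn B).Structure B :=
        Language.constantsOn.structure (id : B → B)
      letI cBig : (Language.constantsOn (A ⊕ B)).Structure B :=
        Language.constantsOn.structure (Sum.elim j (id : B → B))
      letI SBA : (L[[A]]).Structure B := Language.withConstantsStructure L A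
      letI SBB : (L[[B]]).Structure B := Language.withConstantsStructure L B
      letI SBbig : (L[[A ⊕ B]]).Structure B := Language.withConstantsStructure L (A ⊕ B)
      haveI hexpA : ιA.IsExpansionOn B :=
        withConstantsMap_expansion SB (Sum.inl : A → A ⊕ B) (Sum.elim j (id : B → B)) j rfl
      haveI hexpB : ιB.IsExpansionOn B :=
        withConstantsMap_expansion SB (Sum.inr : B → A ⊕ B) (Sum.elim j (id : B → B))
          (id : B → B) rfl
      have hmodel : ∀ φ0 ∈ T0, @Sentence.Realize _ B SBbig φ0 := by
        intro φ0 hmem0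
        have hτre : Formula.Realize (τ φ0) (Sum.elim b j) :=
          BoundedFormula.realize_iInf.mp hw' ⟨φ0, hmem0⟩
        by_cases h : ∃ ψ0 ∈ L.elementaryDiagram A, ιA.onSentence ψ0 = φ0
        · rw [← h.choose_spec.2]
          rw [LHom.realize_onSentence]
          rw [hτ1 φ0 h, Formula.realize_relabel] at hτre
          exact (Formula.realize_equivSentence_symm B h.choose
            (Sum.elim b j ∘ Sum.inr)).mp hτre
        · by_cases h' : ∃ i, eqSent i = φ0
          · rw [← h'.choose_spec]
            rw [hτ2 φ0 h h'] at hτre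
            have hbj : b h'.choose = j (a h'.choose) := Formula.realize_equal.mp hτre
            show @Sentence.Realize _ B SBbig (Term.equal
              ((L.con (Sum.inl (a h'.choose))).term) ((L.con (Sum.inr (b h'.choose))).term))
            refine Formula.realize_equal.mpr ?_
            rw [Term.realize_constants, Term.realize_constants]
            exact hbj.symm
          · -- then `φ0` belongs to the elementary diagram of `B`
            have hmemT := hT0 hmem0
            rcases hmemT with (hh | hh) | hh
            · exact absurd hh h
            · obtain ⟨ψ0, hψ0, rfl⟩ := hh
              rw [LHom.realize_onSentence]
              exact hψ0
            · exact absurd hh h'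
      haveI : Nonempty B := ⟨j (Classical.arbitrary A)⟩
      haveI : @Theory.Model _ B SBbig (T0 : L[[A ⊕ B]].Theory) :=
        (Theory.model_iff _).mpr (fun φ0 hφ0 => hmodel φ0 hφ0)
      exact Theory.Model.isSatisfiable B
    -- Extract the amalgam from a model of `T`.
    obtain ⟨M⟩ := hsat
    letI bigM : (L[[A ⊕ B]]).Structure M := M.struc
    letI SMA : (L[[A]]).Structure M := ιA.reduct M
    letI SMB : (L[[B]]).Structure M := ιB.reduct M
    letI SLM : L.Structure M := @LHom.reduct L (L[[A ⊕ B]]) LHom.sumInl M bigM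
    haveI e1 : (Language.lhomWithConstants L A).IsExpansionOn M :=
      ⟨fun _ _ => rfl, fun _ _ => rfl⟩
    haveI e2 : (Language.lhomWithConstants L B).IsExpansionOn M :=
      ⟨fun _ _ => rfl, fun _ _ => rfl⟩
    haveI eA : ιA.IsExpansionOn M := LHom.isExpansionOn_reduct ιA M
    haveI eB : ιB.IsExpansionOn M := LHom.isExpansionOn_reduct ιB M
    haveI mT : M ⊨ T := M.is_model
    haveI mA : M ⊨ L.elementaryDiagram A := by
      have h1 : M ⊨ ιA.onTheory (L.elementaryDiagram A) :=
        mT.mono (fun x hx => Or.inl (Or.inl hx))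
      exact (ιA.onTheory_model _).mp h1
    haveI mB : M ⊨ L.elementaryDiagram B := by
      have h1 : M ⊨ ιB.onTheory (L.elementaryDiagram B) :=
        mT.mono (fun x hx => Or.inl (Or.inr hx))
      exact (ιB.onTheory_model _).mp h1
    refine ⟨M, SLM, ElementaryEmbedding.ofModelsElementaryDiagram L A M,
      ElementaryEmbedding.ofModelsElementaryDiagram L B M, fun i => ?_⟩
    have hEq : @Sentence.Realize _ M bigM (eqSent i) :=
      T.realize_sentence_of_mem (Or.inr ⟨i, rfl⟩)
    have h3 := (Formula.realize_equal
      (t₁ := ((L.con (Sum.inl (a i))).term : (L[[A ⊕ B]]).Term Empty))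
      (t₂ := ((L.con (Sum.inr (b i))).term)) (x := (default : Empty → M))).mp hEq
    rw [Term.realize_constants, Term.realize_constants] at h3
    exact h3

/-- Unfolding of the weak forcing relation. -/
private theorem wforces_unfold {n : ℕ} (ψ : InfForm L n) (M : Type u) (S : L.Structure M)
    (v : Fin n → M) :
    WForces ψ M S v ↔ ∀ (N : Type u) (SN : L.Structure N) (f : ElemEmb M N S SN),
      ∃ (P : Type u) (SP : L.Structure P) (g : ElemEmb N P SN SP),
        Forces ψ P SP (fun i => g.toFun (f.toFun (v i))) := by
  unfold WForces
  show (∀ (N : Type u) (SN : L.Structure N) (f : ElemEmb M N S SN),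
      ¬ Forces (InfForm.not ψ) N SN (fun i => f.toFun (v i))) ↔ _
  refine forall_congr' fun N => forall_congr' fun SN => forall_congr' fun f => ?_
  show ¬ (∀ (P : Type u) (SP : L.Structure P) (g : ElemEmb N P SN SP),
      ¬ Forces ψ P SP (fun i => g.toFun (f.toFun (v i)))) ↔ _
  push_neg
  rfl

/-- Weak forcing is invariant under elementary extension. -/
private theorem wforces_iff {n : ℕ} (ψ : InfForm L n) {A C : Type u}
    (SA : L.Structure A) (SC : L.Structure C) (f : ElemEmb A C SA SC) (a : Fin n → A) :
    WForces ψ A SA a ↔ WForces ψ C SC (fun i => f.toFun (a i)) := by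
  letI := SA; letI := SC
  rw [wforces_unfold, wforces_unfold]
  constructor
  · intro hA N SN g
    obtain ⟨P, SP, m, hm⟩ := hA N SN (g.comp f)
    exact ⟨P, SP, m, hm⟩
  · intro hC N SN g
    letI := SN
    have H : ∀ φ : L.Formula A, φ.Realize (fun x : A => f.toFun x) ↔
        φ.Realize (fun x : A => g.toFun x) := by
      intro φ
      exact (f.map_formula φ id).trans (g.map_formula φ id).symm
    obtain ⟨D, SD, k, l, hkl⟩ := amalg SC SN (fun x : A => f.toFun x)
      (fun x : A => g.toFun x) H
    obtain ⟨P, SP, m, hm⟩ := hC D SD k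
    refine ⟨P, SP, m.comp l, ?_⟩
    have he : (fun i => (m.comp l).toFun (g.toFun (a i))) =
        fun i => m.toFun (k.toFun (f.toFun (a i))) := by
      funext i
      show m.toFun (l.toFun (g.toFun (a i))) = m.toFun (k.toFun (f.toFun (a i)))
      rw [← hkl (a i)]
    rw [he]
    exact hm

end Aux

section Translation

open FirstOrder.Language

variable {L : FirstOrder.Language.{u, u}} {n : ℕ}

private def falseInf {m : ℕ} : InfForm L m :=
  InfForm.disj (ι := PEmpty.{u + 1}) (fun x => x.elim)

private def impInf {m : ℕ} (φ ψ' : InfForm L m) : InfForm L m :=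
  InfForm.disj (ι := ULift.{u} Bool) (fun i => if i.down then ψ' else φ.not)

private def ofBF : ∀ {k : ℕ}, L.BoundedFormula (Fin n) k → InfForm L (n + k)
  | _, .falsum => falseInf
  | _, .equal t₁ t₂ => .equal (t₁.relabel finSumFinEquiv) (t₂.relabel finSumFinEquiv)
  | _, .rel R ts => .rel R (fun i => (ts i).relabel finSumFinEquiv)
  | _, .imp φ ψ' => impInf (ofBF φ) (ofBF ψ')
  | _, .all φ => .all (ofBF φ)

private theorem ofBF_finitary : ∀ {k : ℕ} (φ : L.BoundedFormula (Fin n) k),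
    InfForm.IsFinitary L (ofBF φ)
  | _, .falsum => .disj inferInstance (fun i => i.elim)
  | _, .equal t₁ t₂ => .equal _ _
  | _, .rel R ts => .rel _ _
  | _, .imp φ ψ' => .disj inferInstance (fun i => by
      rcases i with ⟨bb⟩
      cases bb with
      | false =>
        show InfForm.IsFinitary L (if (false : Bool) then ofBF ψ' else (ofBF φ).not)
        rw [if_neg Bool.false_ne_true]
        exact .not (ofBF_finitary φ)
      | true =>
        show InfForm.IsFinitary L (if (true : Bool) then ofBF ψ' else (ofBF φ).not)
        rw [if_pos rfl]
        exact ofBF_finitary ψ')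
  | _, .all φ => .all (ofBF_finitary φ)

private theorem realize_ofBF : ∀ {k : ℕ} (φ : L.BoundedFormula (Fin n) k) {M : Type u}
    [SM : L.Structure M] (w : Fin (n + k) → M),
    Realize (ofBF φ) M SM w ↔ φ.Realize (w ∘ Fin.castAdd k) (w ∘ Fin.natAdd n)
  | _, .falsum, M, SM, w => by
    constructor
    · rintro ⟨i, -⟩
      exact i.elim
    · intro hh
      exact absurd hh (by simp [BoundedFormula.Realize])
  | k, .equal t₁ t₂, M, SM, w => by
    have hsum : (w ∘ finSumFinEquiv : Fin n ⊕ Fin k → M) =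
        Sum.elim (w ∘ Fin.castAdd k) (w ∘ Fin.natAdd n) := by
      funext d
      cases d with
      | inl i => simp [finSumFinEquiv]
      | inr i => simp [finSumFinEquiv]
    show (t₁.relabel finSumFinEquiv).realize w = (t₂.relabel finSumFinEquiv).realize w ↔ _
    rw [Term.realize_relabel, Term.realize_relabel, hsum]
    exact Iff.rfl
  | k, .rel R ts, M, SM, w => by
    have hsum : (w ∘ finSumFinEquiv : Fin n ⊕ Fin k → M) =
        Sum.elim (w ∘ Fin.castAdd k) (w ∘ Fin.natAdd n) := by
      funext d
      cases d with
      | inl i => simp [finSumFinEquiv]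
      | inr i => simp [finSumFinEquiv]
    show (Language.Structure.RelMap R fun i => ((ts i).relabel finSumFinEquiv).realize w) ↔
      Language.Structure.RelMap R fun i =>
        (ts i).realize (Sum.elim (w ∘ Fin.castAdd k) (w ∘ Fin.natAdd n))
    simp only [Term.realize_relabel, hsum]
  | k, .imp φ ψ', M, SM, w => by
    rw [BoundedFormula.realize_imp]
    constructor
    · rintro ⟨⟨bb⟩, hbb⟩ hφ
      cases bb with
      | false =>
        exfalso
        have hbb' : Realize (if (false : Bool) then ofBF ψ' else (ofBF φ).not) M SM w := hbb
        rw [if_neg Bool.false_ne_true] at hbb'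
        exact hbb' ((realize_ofBF φ w).mpr hφ)
      | true =>
        have hbb' : Realize (if (true : Bool) then ofBF ψ' else (ofBF φ).not) M SM w := hbb
        rw [if_pos rfl] at hbb'
        exact (realize_ofBF ψ' w).mp hbb'
    · intro hh
      by_cases hφ : φ.Realize (w ∘ Fin.castAdd k) (w ∘ Fin.natAdd n)
      · refine ⟨⟨true⟩, ?_⟩
        show Realize (if (true : Bool) then ofBF ψ' else (ofBF φ).not) M SM w
        rw [if_pos rfl]
        exact (realize_ofBF ψ' w).mpr (hh hφ)
      · refine ⟨⟨false⟩, ?_⟩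
        show Realize (if (false : Bool) then ofBF ψ' else (ofBF φ).not) M SM w
        rw [if_neg Bool.false_ne_true]
        exact fun hc => hφ ((realize_ofBF φ w).mp hc)
  | k, .all φ, M, SM, w => by
    rw [BoundedFormula.realize_all]
    show (∀ x : M, Realize (ofBF φ) M SM (Fin.snoc w x)) ↔ _
    refine forall_congr' fun x => (realize_ofBF φ (Fin.snoc w x)).trans ?_
    have h1 : ((Fin.snoc w x : Fin (n + k + 1) → M) ∘ Fin.castAdd (k + 1)) =
        w ∘ Fin.castAdd k := by
      funext i
      have : (Fin.castAdd (k + 1) i : Fin (n + k + 1)) = Fin.castSucc (Fin.castAdd k i) :=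
        Fin.ext rfl
      rw [Function.comp_apply, this, Fin.snoc_castSucc]
      rfl
    have h2 : ((Fin.snoc w x : Fin (n + k + 1) → M) ∘ Fin.natAdd n) =
        Fin.snoc (w ∘ Fin.natAdd n) x := by
      funext j
      refine Fin.lastCases ?_ ?_ j
      · have : (Fin.natAdd n (Fin.last k) : Fin (n + k + 1)) = Fin.last (n + k) :=
          Fin.ext rfl
        rw [Function.comp_apply, this, Fin.snoc_last, Fin.snoc_last]
      · intro j'
        have : (Fin.natAdd n (Fin.castSucc j') : Fin (n + k + 1)) =
            Fin.castSucc (Fin.natAdd n j') := Fin.ext rfl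
        rw [Function.comp_apply, this, Fin.snoc_castSucc, Fin.snoc_castSucc]
        rfl
    rw [h1, h2]

private theorem realize_ofBF0 (φ : L.Formula (Fin n)) {M : Type u} [SM : L.Structure M]
    (w : Fin n → M) : Realize (ofBF (k := 0) φ) M SM w ↔ φ.Realize w := by
  refine (realize_ofBF (k := 0) φ w).trans ?_
  rw [show (w ∘ Fin.castAdd 0) = w from funext fun i => congrArg w (Fin.ext rfl)]
  exact iff_of_eq (congrArg (BoundedFormula.Realize φ w) (Subsingleton.elim _ _))

end Translation

/-- Weak forcing depends only on the elementary type of the parameters: if `(A, ā)`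
and `(B, b̄)` satisfy the same finitary formulas, then for any infinitary `ψ`,
`A ⊩* ψ(ā)` iff `B ⊩* ψ(b̄)`. -/
theorem stmt16 {L : FirstOrder.Language.{u, u}} {n : ℕ}
    {A B : Type u} (SA : L.Structure A) (SB : L.Structure B)
    (a : Fin n → A) (b : Fin n → B)
    (h : ∀ φ : InfForm L n, InfForm.IsFinitary L φ →
      (Realize φ A SA a ↔ Realize φ B SB b))
    (ψ : InfForm L n) :
    WForces ψ A SA a ↔ WForces ψ B SB b := by
  classical
  letI := SA; letI := SB
  have Hfin : ∀ φ : L.Formula (Fin n), φ.Realize a ↔ φ.Realize b := fun φ =>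
    (realize_ofBF0 φ a).symm.trans
      ((h (ofBF (k := 0) φ) (ofBF_finitary φ)).trans (realize_ofBF0 φ b))
  have H' : ∀ φ : L.Formula (ULift.{u} (Fin n)),
      φ.Realize (a ∘ ULift.down) ↔ φ.Realize (b ∘ ULift.down) := by
    intro φ
    rw [← FirstOrder.Language.Formula.realize_relabel (g := ULift.down) (φ := φ) (v := a),
      ← FirstOrder.Language.Formula.realize_relabel (g := ULift.down) (φ := φ) (v := b)]
    exact Hfin _
  obtain ⟨C, SC, f, g, hfg⟩ := amalg SA SB (a ∘ ULift.down) (b ∘ ULift.down) H'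
  have e : (fun i => f.toFun (a i)) = (fun i => g.toFun (b i)) :=
    funext fun i => hfg ⟨i⟩
  rw [wforces_iff ψ SA SC f a, wforces_iff ψ SB SC g b, e]

end InfinitaryForcing
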